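/- Let T be a bounded linear operator on a complex Hilbert space H and N an algebra norm on B(H). Then dw_N(T) ≥ (1/2) sqrt( (1/2) N(T² + (T*)²) + w_N(T)² + 2 N(|T|)⁴ + (d₁ + d₂) + 2|m₁ − m₂| ), where m₁ = max{N(Re T)² + N(|T|)⁴, w_N(T)²}, m₂ = max{N(Im T)², N(|T|)⁴}, d₁ = |N(Re T)² + N(|T|)⁴ − w_N(T)²|, d₂ = |N(Im T)² − N(|T|)⁴|. -/

import Mathlib

open ContinuousLinearMap Complex

variable {H : Type*} [NormedAddCommGroup H] [InnerProductSpace ℂ H] [CompleteSpace H]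

/-- Real part of an operator: `Re(A) = (A + A*)/2`. -/
noncomputable def reOp (A : H →L[ℂ] H) : H →L[ℂ] H := (2 : ℂ)⁻¹ • (A + adjoint A)

/-- Imaginary part of an operator: `Im(A) = (A - A*)/(2i)`. -/
noncomputable def imOp (A : H →L[ℂ] H) : H →L[ℂ] H := (2 * I)⁻¹ • (A - adjoint A)

/-- Modulus of an operator: `|A| = (A* A)^{1/2}`. -/
noncomputable def absOp (A : H →L[ℂ] H) : H →L[ℂ] H := CFC.sqrt (adjoint A * A)

/-- Generalized numerical radius. -/
noncomputable def wN (N : (H →L[ℂ] H) → ℝ) (T : H →L[ℂ] H) : ℝ :=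
  ⨆ θ : ℝ, N (reOp (Complex.exp (θ * I) • T))

/-- Generalized Davis–Wielandt radius. -/
noncomputable def dwN (N : (H →L[ℂ] H) → ℝ) (T : H →L[ℂ] H) : ℝ :=
  ⨆ θ : ℝ, Real.sqrt ((N (reOp (Complex.exp (θ * I) • T))) ^ 2
    + (N (reOp (Complex.exp (θ * I) • absOp T))) ^ 4)

set_option synthInstance.maxHeartbeats 1000000 in
lemma absOp_sa' (A : H →L[ℂ] H) : IsSelfAdjoint (absOp A) :=
  IsSelfAdjoint.of_nonneg (CFC.sqrt_nonneg _)

lemma key_id' (T : H →L[ℂ] H) :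
    T ^ 2 + (adjoint T) ^ 2 = (2:ℂ) • (reOp T * reOp T - imOp T * imOp T) := by
  simp only [reOp, imOp, pow_two, smul_mul_smul_comm, mul_sub, sub_mul, mul_add, add_mul,
    smul_sub, smul_add]
  match_scalars <;> field_simp <;> ring_nf <;> simp [Complex.I_sq] <;> norm_num

lemma reOp_smul' (c : ℂ) (A : H →L[ℂ] H) :
    reOp (c • A) = (2:ℂ)⁻¹ • (c • A + (starRingEnd ℂ c) • adjoint A) := by
  rw [reOp, ← star_eq_adjoint (c • A), star_smul, star_eq_adjoint]
  rfl

lemma reOp_neg_I_smul' (T : H →L[ℂ] H) : reOp ((-I) • T) = imOp T := by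
  rw [reOp, imOp, ← star_eq_adjoint (-I • T), star_smul, star_eq_adjoint]
  match_scalars <;> field_simp <;> ring_nf <;> simp [Complex.I_sq] <;> ring

lemma exp_neg_pi_div_two' : Complex.exp (((-(Real.pi/2) : ℝ) : ℂ) * I) = -I := by
  rw [Complex.exp_mul_I, ← Complex.ofReal_cos, ← Complex.ofReal_sin]
  simp

lemma abs_max_sum (x y : ℝ) : x + y + |x - y| = 2 * max x y := by
  rcases le_total x y with h | h
  · rw [_root_.abs_of_nonpos (by linarith), max_eq_right h]; ring
  · rw [_root_.abs_of_nonneg (by linarith), max_eq_left h]; ring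

set_option maxHeartbeats 2000000 in
theorem stmt_13 (N : (H →L[ℂ] H) → ℝ) (T : H →L[ℂ] H)
    (hN0 : ∀ A : H →L[ℂ] H, 0 ≤ N A)
    (hNeq : ∀ A : H →L[ℂ] H, N A = 0 → A = 0)
    (hNadd : ∀ A B : H →L[ℂ] H, N (A + B) ≤ N A + N B)
    (hNsmul : ∀ (c : ℂ) (A : H →L[ℂ] H), N (c • A) = ‖c‖ * N A)
    (hNmul : ∀ A B : H →L[ℂ] H, N (A * B) ≤ N A * N B)
    (m₁ m₂ d₁ d₂ : ℝ)
    (hm₁ : m₁ = max ((N (reOp T)) ^ 2 + (N (absOp T)) ^ 4) ((wN N T) ^ 2))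
    (hm₂ : m₂ = max ((N (imOp T)) ^ 2) ((N (absOp T)) ^ 4))
    (hd₁ : d₁ = |(N (reOp T)) ^ 2 + (N (absOp T)) ^ 4 - (wN N T) ^ 2|)
    (hd₂ : d₂ = |(N (imOp T)) ^ 2 - (N (absOp T)) ^ 4|) :
    dwN N T ≥ (1 / 2) * Real.sqrt ((1 / 2) * N (T ^ 2 + (adjoint T) ^ 2)
      + (wN N T) ^ 2 + 2 * (N (absOp T)) ^ 4 + (d₁ + d₂) + 2 * |m₁ - m₂|) := by
  clear hNeq
  set a := N (reOp T) with ha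
  set b := N (imOp T) with hb
  set c := N (absOp T) with hc
  set w := wN N T with hwdef
  set D := dwN N T with hDdef
  -- the two families
  set f₁ : ℝ → ℝ := fun θ => N (reOp (Complex.exp (θ * I) • T)) with hf₁
  set f₂ : ℝ → ℝ := fun θ => N (reOp (Complex.exp (θ * I) • absOp T)) with hf₂
  set g : ℝ → ℝ := fun θ => Real.sqrt (f₁ θ ^ 2 + f₂ θ ^ 4) with hg
  have hwg : w = ⨆ θ, f₁ θ := rfl
  have hDg : D = ⨆ θ, g θ := rfl
  -- adjoint of absOp
  have habs : adjoint (absOp T) = absOp T := by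
    rw [← star_eq_adjoint]; exact absOp_sa' T
  have hreabs : reOp (absOp T) = absOp T := by
    rw [reOp, habs, ← two_smul ℂ, smul_smul]
    norm_num
  -- uniform bounds
  have hbound : ∀ (A : H →L[ℂ] H) (θ : ℝ),
      N (reOp (Complex.exp ((θ:ℂ) * I) • A)) ≤ (1/2) * (N A + N (adjoint A)) := by
    intro A θ
    rw [reOp_smul', hNsmul]
    have h1 : N (Complex.exp ((θ:ℂ) * I) • A
        + (starRingEnd ℂ (Complex.exp ((θ:ℂ) * I))) • adjoint A) ≤ N A + N (adjoint A) := by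
      refine (hNadd _ _).trans ?_
      rw [hNsmul, hNsmul, RCLike.norm_conj, Complex.norm_exp_ofReal_mul_I]
      simp
    have h2 : ‖(2:ℂ)⁻¹‖ = 1/2 := by norm_num
    rw [h2]
    nlinarith [hN0 (Complex.exp ((θ:ℂ) * I) • A
        + (starRingEnd ℂ (Complex.exp ((θ:ℂ) * I))) • adjoint A)]
  have hf₁b : ∀ θ, f₁ θ ≤ (1/2) * (N T + N (adjoint T)) := fun θ => hbound T θ
  have hf₂b : ∀ θ, f₂ θ ≤ c := by
    intro θ
    have := hbound (absOp T) θ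
    rw [habs] at this
    simpa using this.trans (by linarith)
  have hgb : ∀ θ, g θ ≤ Real.sqrt (((1/2) * (N T + N (adjoint T)))^2 + c^4) := by
    intro θ
    apply Real.sqrt_le_sqrt
    exact add_le_add (pow_le_pow_left₀ (hN0 _) (hf₁b θ) 2) (pow_le_pow_left₀ (hN0 _) (hf₂b θ) 4)
  have hBg : BddAbove (Set.range g) := ⟨_, by rintro _ ⟨θ, rfl⟩; exact hgb θ⟩
  have hBf₁ : BddAbove (Set.range f₁) := ⟨_, by rintro _ ⟨θ, rfl⟩; exact hf₁b θ⟩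
  -- values at θ = 0
  have hf₁0 : f₁ 0 = a := by simp [hf₁]; rfl
  have hf₂0 : f₂ 0 = c := by simp [hf₂, hreabs]; rfl
  have hg0 : g 0 = Real.sqrt (a^2 + c^4) := by rw [hg]; simp [hf₁0, hf₂0]
  have h1 : Real.sqrt (a^2 + c^4) ≤ D := by
    rw [hDg, ← hg0]; exact le_ciSup hBg 0
  -- value at θ = -(π/2)
  have hf₁pi : f₁ (-(Real.pi/2)) = b := by
    simp only [hf₁]
    rw [exp_neg_pi_div_two', reOp_neg_I_smul']
  have h2 : b ≤ D := by
    have hb0 : 0 ≤ b := by rw [hb]; exact hN0 _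
    have hb' : b ≤ g (-(Real.pi/2)) := by
      show b ≤ Real.sqrt (f₁ (-(Real.pi/2)) ^ 2 + f₂ (-(Real.pi/2)) ^ 4)
      rw [hf₁pi]
      have h' : Real.sqrt (b^2) ≤ Real.sqrt (b^2 + f₂ (-(Real.pi/2)) ^ 4) :=
        Real.sqrt_le_sqrt (le_add_of_nonneg_right (by positivity))
      rwa [Real.sqrt_sq hb0] at h'
    exact hb'.trans (by rw [hDg]; exact le_ciSup hBg _)
  -- w ≤ D
  have h3 : w ≤ D := by
    rw [hwg]
    refine ciSup_le fun θ => ?_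
    have hfg : f₁ θ ≤ g θ := by
      have hf0 : 0 ≤ f₁ θ := hN0 _
      show f₁ θ ≤ Real.sqrt (f₁ θ ^ 2 + f₂ θ ^ 4)
      have h' : Real.sqrt (f₁ θ ^ 2) ≤ Real.sqrt (f₁ θ ^ 2 + f₂ θ ^ 4) :=
        Real.sqrt_le_sqrt (le_add_of_nonneg_right (by positivity))
      rwa [Real.sqrt_sq hf0] at h'
    exact hfg.trans (by rw [hDg]; exact le_ciSup hBg θ)
  have h4 : a ≤ w := by
    rw [hwg, ← hf₁0]; exact le_ciSup hBf₁ 0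
  have hD0 : 0 ≤ D := (Real.sqrt_nonneg _).trans h1
  have hw0 : 0 ≤ w := (hN0 _).trans h4
  -- squared bounds
  have hac : a^2 + c^4 ≤ D^2 := by
    have := pow_le_pow_left₀ (Real.sqrt_nonneg _) h1 2
    rwa [Real.sq_sqrt (by positivity)] at this
  have hw2 : w^2 ≤ D^2 := pow_le_pow_left₀ hw0 h3 2
  have hb2 : b^2 ≤ D^2 := pow_le_pow_left₀ (hN0 _) h2 2
  have hc4 : c^4 ≤ D^2 := by nlinarith [sq_nonneg a]
  have hm1D : m₁ ≤ D^2 := by rw [hm₁]; exact max_le hac hw2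
  have hm2D : m₂ ≤ D^2 := by rw [hm₂]; exact max_le hb2 hc4
  -- norm bound for T² + T*²
  have hsub : ∀ X Y : H →L[ℂ] H, N (X - Y) ≤ N X + N Y := by
    intro X Y
    have hXY : X - Y = X + (-1:ℂ) • Y := by
      simp [sub_eq_add_neg, neg_smul, one_smul]
    rw [hXY]
    refine (hNadd _ _).trans ?_
    rw [hNsmul]; simp
  have hT2 : (1/2) * N (T^2 + (adjoint T)^2) ≤ a^2 + b^2 := by
    rw [key_id' T, hNsmul]
    have := hsub (reOp T * reOp T) (imOp T * imOp T)
    have hra := hNmul (reOp T) (reOp T)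
    have hia := hNmul (imOp T) (imOp T)
    have h2 : ‖(2:ℂ)‖ = 2 := by norm_num
    rw [h2]
    nlinarith [hN0 (reOp T * reOp T - imOp T * imOp T)]
  -- max arithmetic
  have s₁ : (a^2 + c^4) + w^2 + d₁ = 2 * m₁ := by rw [hd₁, hm₁]; exact abs_max_sum _ _
  have s₂ : b^2 + c^4 + d₂ = 2 * m₂ := by rw [hd₂, hm₂]; exact abs_max_sum _ _
  have s₃ : m₁ + m₂ + |m₁ - m₂| = 2 * max m₁ m₂ := abs_max_sum _ _
  have hmax : max m₁ m₂ ≤ D^2 := max_le hm1D hm2D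
  have hS : (1/2) * N (T^2 + (adjoint T)^2) + w^2 + 2*c^4 + (d₁ + d₂) + 2*|m₁ - m₂|
      ≤ 4 * D^2 := by linarith
  -- conclude
  have hsqrt : Real.sqrt ((1/2) * N (T^2 + (adjoint T)^2) + w^2 + 2*c^4 + (d₁ + d₂)
      + 2*|m₁ - m₂|) ≤ 2 * D := by
    have h4D : (4 : ℝ) * D^2 = (2*D)^2 := by ring
    calc Real.sqrt _ ≤ Real.sqrt (4 * D^2) := Real.sqrt_le_sqrt hS
      _ = 2 * D := by rw [h4D, Real.sqrt_sq (by linarith)]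
  linarith
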